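/- Let ω : ℝ³ → ℝ³ be continuously differentiable with ∇·ω = 0, and let x : [0,L] → ℝ³ (L > 0) be an arclength parameterization of a vortex line segment: x'(s) = ξ(x(s)) for all s, where ξ = ω/|ω|, and ω(x(s)) ≠ 0 for all s ∈ [0,L]. Then: (i) for all 0 ≤ s₁ ≤ s₂ ≤ L, |ω(x(s₂))| = |ω(x(s₁))| · exp( −∫_{s₁}^{s₂} (∇·ξ)(x(s)) ds ); and (ii) if ∫₀^{L} |(∇·ξ)(x(s))| ds ≤ C₀, then max_{s∈[0,L]} |ω(x(s))| ≤ e^{C₀} · min_{s∈[0,L]} |ω(x(s))| ≤ e^{C₀} · (1/L)∫₀^{L} |ω(x(s))| ds. (Deng–Hou–Yu's Lemma 1 identity and the paper's inequality (2.20).) -/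

import Mathlib

open Real MeasureTheory intervalIntegral Set

noncomputable section

/-- Three-dimensional Euclidean space. -/
abbrev E3 := EuclideanSpace ℝ (Fin 3)

/-- Partial derivative of a scalar function in the `j`-th coordinate direction. -/
def pd3 (f : E3 → ℝ) (y : E3) (j : Fin 3) : ℝ := fderiv ℝ f y (EuclideanSpace.single j 1)

/-- Divergence of a vector field on `E3`. -/
def div3 (v : E3 → E3) (y : E3) : ℝ := ∑ j, pd3 (fun z => v z j) y j

open RealInnerProductSpace in
lemma aux_norm_fderiv {f : E3 → E3} {f' : E3 →L[ℝ] E3} {y : E3}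
    (hf : HasFDerivAt f f' y) (h0 : f y ≠ 0) :
    HasFDerivAt (fun z => ‖f z‖) (‖f y‖⁻¹ • ((innerSL ℝ (f y)).comp f')) y := by
  have hn : ‖f y‖ ≠ 0 := norm_ne_zero_iff.mpr h0
  have h1 : HasFDerivAt (‖f ·‖ ^ 2) (2 • (innerSL ℝ (f y)).comp f') y := hf.norm_sq
  have h2 : HasDerivAt Real.sqrt (1 / (2 * Real.sqrt (‖f y‖^2))) (‖f y‖^2) :=
    Real.hasDerivAt_sqrt (pow_ne_zero 2 hn)
  have h3 := h2.comp_hasFDerivAt y h1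
  have h4 : (Real.sqrt ∘ fun z => ‖f z‖ ^ 2) = fun z => ‖f z‖ := by
    funext z; simp [Function.comp, Real.sqrt_sq (norm_nonneg _)]
  rw [h4] at h3
  refine h3.congr_fderiv ?_
  rw [Real.sqrt_sq (norm_nonneg _)]
  ext v
  simp [ContinuousLinearMap.smul_apply]
  field_simp

open RealInnerProductSpace in
lemma aux_div3_xi (ω : E3 → E3) (hω : ContDiff ℝ 1 ω) (hdiv : ∀ y : E3, div3 ω y = 0)
    {y : E3} (h0 : ω y ≠ 0) :
    div3 (fun z => ‖ω z‖⁻¹ • ω z) y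
      = -(‖ω y‖ ^ 3)⁻¹ * ⟪ω y, fderiv ℝ ω y (ω y)⟫ := by
  have hn : ‖ω y‖ ≠ 0 := norm_ne_zero_iff.mpr h0
  set D := fderiv ℝ ω y with hDdef
  have hD : HasFDerivAt ω D y := (hω.differentiable one_ne_zero y).hasFDerivAt
  set Nd : E3 →L[ℝ] ℝ := ‖ω y‖⁻¹ • ((innerSL ℝ (ω y)).comp D) with hNddef
  have hN : HasFDerivAt (fun z => ‖ω z‖) Nd y := aux_norm_fderiv hD h0
  have hNinv : HasFDerivAt (fun z => ‖ω z‖⁻¹) (-(‖ω y‖ ^ 2)⁻¹ • Nd) y := by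
    have := (hasDerivAt_inv hn).comp_hasFDerivAt y hN
    exact this
  have hcoord : ∀ j : Fin 3, HasFDerivAt (fun z => ω z j)
      ((EuclideanSpace.proj j).comp D) y := fun j => by
    exact ((EuclideanSpace.proj (𝕜 := ℝ) j).hasFDerivAt.comp y hD : _)
  have hj : ∀ j : Fin 3, pd3 (fun z => (‖ω z‖⁻¹ • ω z) j) y j
      = ‖ω y‖⁻¹ * (D (EuclideanSpace.single j 1) j)
        - (‖ω y‖ ^ 3)⁻¹ * (ω y j * ⟪ω y, D (EuclideanSpace.single j 1)⟫) := by
    intro j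
    have hmul := hNinv.mul (hcoord j)
    have hfun : (fun z => ‖ω z‖⁻¹ * ω z j) = fun z => (‖ω z‖⁻¹ • ω z) j := by
      funext z; simp [PiLp.smul_apply, smul_eq_mul]
    rw [show ((fun z => ‖ω z‖⁻¹) * fun z => ω z j) = fun z => ‖ω z‖⁻¹ * ω z j from rfl, hfun] at hmul
    rw [pd3, hmul.fderiv]
    simp [ContinuousLinearMap.smul_apply, hNddef]
    field_simp
    ring
  have hsum : D (ω y) = ∑ j, ω y j • D (EuclideanSpace.single j 1) := by
    have hbasis : ω y = ∑ j, ω y j • EuclideanSpace.single j (1:ℝ) := by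
      ext i
      rw [WithLp.ofLp_sum, Finset.sum_apply]
      simp [EuclideanSpace.single_apply, PiLp.smul_apply, smul_eq_mul]
    conv_lhs => rw [hbasis]
    simp
  have hdivy := hdiv y
  have hdivy' : ∑ j, D (EuclideanSpace.single j 1) j = 0 := by
    rw [div3] at hdivy
    convert hdivy using 2 with j
    rw [pd3, (hcoord j).fderiv]
    simp
  rw [div3, Finset.sum_congr rfl (fun j _ => hj j), Finset.sum_sub_distrib,
    ← Finset.mul_sum, ← Finset.mul_sum, hdivy', mul_zero, zero_sub, hsum]
  rw [inner_sum]
  simp only [real_inner_smul_right]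
  ring

open RealInnerProductSpace

/-- **Deng–Hou–Yu's Lemma 1 identity and the paper's inequality (2.20).**
For a divergence-free `C¹` field `ω` and a vortex line segment `x(s)`, `0 ≤ s ≤ L`,
parameterized by arclength (`x' = ξ(x(s))`, `ξ = ω/|ω|`, `ω ≠ 0` along it):
(i) `|ω(x(s₂))| = |ω(x(s₁))| exp(−∫_{s₁}^{s₂} (∇·ξ)(x(s)) ds)`;
(ii) if `∫₀^L |(∇·ξ)(x(s))| ds ≤ C₀` then
`max |ω| ≤ e^{C₀} min |ω| ≤ e^{C₀} (1/L) ∫₀^L |ω(x(s))| ds` along the segment. -/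
theorem stmt17
    (ω : E3 → E3) (hω : ContDiff ℝ 1 ω)
    (hdiv : ∀ y : E3, div3 ω y = 0)
    (L : ℝ) (hL : 0 < L) (x : ℝ → E3)
    (hx : ∀ s ∈ Icc (0:ℝ) L, HasDerivAt x (‖ω (x s)‖⁻¹ • ω (x s)) s)
    (hne : ∀ s ∈ Icc (0:ℝ) L, ω (x s) ≠ 0) :
    (∀ s₁ s₂ : ℝ, 0 ≤ s₁ → s₁ ≤ s₂ → s₂ ≤ L →
      ‖ω (x s₂)‖ = ‖ω (x s₁)‖ *
        Real.exp (-∫ s in s₁..s₂, div3 (fun y => ‖ω y‖⁻¹ • ω y) (x s)))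
    ∧ (∀ C₀ : ℝ, (∫ s in (0:ℝ)..L, |div3 (fun y => ‖ω y‖⁻¹ • ω y) (x s)|) ≤ C₀ →
        sSup ((fun s => ‖ω (x s)‖) '' Icc 0 L)
          ≤ Real.exp C₀ * sInf ((fun s => ‖ω (x s)‖) '' Icc 0 L)
        ∧ Real.exp C₀ * sInf ((fun s => ‖ω (x s)‖) '' Icc 0 L)
          ≤ Real.exp C₀ * ((1 / L) * ∫ s in (0:ℝ)..L, ‖ω (x s)‖)) := by
  set g : ℝ → ℝ := fun s => div3 (fun y => ‖ω y‖⁻¹ • ω y) (x s) with hgdef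
  set f : ℝ → ℝ := fun s => ‖ω (x s)‖ with hfdef
  have hfpos : ∀ s ∈ Icc (0:ℝ) L, 0 < f s := fun s hs => norm_pos_iff.mpr (hne s hs)
  -- Step A : derivative of f
  have hfderiv : ∀ s ∈ Icc (0:ℝ) L, HasDerivAt f (-(g s) * f s) s := by
    intro s hs
    have h0 := hne s hs
    have hn : ‖ω (x s)‖ ≠ 0 := norm_ne_zero_iff.mpr h0
    set D := fderiv ℝ ω (x s) with hDdef
    have hD : HasFDerivAt ω D (x s) := (hω.differentiable one_ne_zero (x s)).hasFDerivAt
    have hN := aux_norm_fderiv hD h0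
    have hcomp := hN.comp_hasDerivAt s (hx s hs)
    have heq : (‖ω (x s)‖⁻¹ • ((innerSL ℝ (ω (x s))).comp D)) (‖ω (x s)‖⁻¹ • ω (x s))
        = -(g s) * f s := by
      rw [hgdef]
      simp only
      rw [aux_div3_xi ω hω hdiv h0, ← hDdef]
      simp [ContinuousLinearMap.smul_apply, real_inner_smul_right, hfdef]
      field_simp
    rw [heq] at hcomp
    exact hcomp
  -- Step B : derivative of log f
  have hlogderiv : ∀ s ∈ Icc (0:ℝ) L, HasDerivAt (fun t => Real.log (f t)) (-(g s)) s := by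
    intro s hs
    have h := (Real.hasDerivAt_log (hfpos s hs).ne').comp s (hfderiv s hs)
    refine h.congr_deriv ?_
    rw [mul_comm, mul_assoc, mul_inv_cancel₀ (hfpos s hs).ne', mul_one]
  -- continuity
  have hxc : ContinuousOn x (Icc (0:ℝ) L) :=
    fun s hs => (hx s hs).continuousAt.continuousWithinAt
  have hfc : ContinuousOn f (Icc (0:ℝ) L) :=
    (continuous_norm.comp hω.continuous).comp_continuousOn hxc
  have hgc : ContinuousOn g (Icc (0:ℝ) L) := by
    have hc1 : ContinuousOn (fun s => ω (x s)) (Icc (0:ℝ) L) :=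
      hω.continuous.comp_continuousOn hxc
    have hfd : Continuous (fderiv ℝ ω) := hω.continuous_fderiv one_ne_zero
    have hc2 : ContinuousOn (fun s => fderiv ℝ ω (x s) (ω (x s))) (Icc (0:ℝ) L) :=
      (hfd.comp_continuousOn hxc).clm_apply hc1
    have hG : ContinuousOn
        (fun s => -(‖ω (x s)‖ ^ 3)⁻¹ * ⟪ω (x s), fderiv ℝ ω (x s) (ω (x s))⟫)
        (Icc (0:ℝ) L) := by
      apply ContinuousOn.mul
      · exact ((hc1.norm.pow 3).inv₀ (fun s hs =>
          pow_ne_zero 3 (norm_ne_zero_iff.mpr (hne s hs)))).neg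
      · exact hc1.inner hc2
    exact hG.congr (fun s hs => aux_div3_xi ω hω hdiv (hne s hs))
  -- Part (i)
  have hId : ∀ s₁ s₂ : ℝ, 0 ≤ s₁ → s₁ ≤ s₂ → s₂ ≤ L →
      f s₂ = f s₁ * Real.exp (-∫ s in s₁..s₂, g s) := by
    intro s₁ s₂ h0 h12 h2L
    have hsub : Icc s₁ s₂ ⊆ Icc 0 L := Icc_subset_Icc h0 h2L
    have huIcc : uIcc s₁ s₂ = Icc s₁ s₂ := uIcc_of_le h12
    have hint : IntervalIntegrable (fun s => -(g s)) volume s₁ s₂ :=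
      ((hgc.mono hsub).neg.mono (by rw [huIcc])).intervalIntegrable
    have key := intervalIntegral.integral_eq_sub_of_hasDerivAt
      (f := fun t => Real.log (f t)) (f' := fun s => -(g s))
      (fun t ht => hlogderiv t (hsub (huIcc ▸ ht))) hint
    rw [intervalIntegral.integral_neg] at key
    have h1 : Real.log (f s₂) = Real.log (f s₁) + (-∫ s in s₁..s₂, g s) := by linarith
    have h2 := congrArg Real.exp h1
    rw [Real.exp_log (hfpos s₂ (hsub (right_mem_Icc.mpr h12))),
      Real.exp_add, Real.exp_log (hfpos s₁ (hsub (left_mem_Icc.mpr h12)))] at h2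
    exact h2
  refine ⟨hId, ?_⟩
  -- Part (ii)
  intro C₀ hC₀
  have hgiabs : IntervalIntegrable (fun s => |g s|) volume 0 L :=
    (hgc.abs.mono (by rw [uIcc_of_le hL.le])).intervalIntegrable
  have habs : ∀ a b : ℝ, 0 ≤ a → a ≤ b → b ≤ L → |∫ s in a..b, g s| ≤ C₀ := by
    intro a b h0 hab hbL
    calc |∫ s in a..b, g s| ≤ ∫ s in a..b, |g s| :=
          intervalIntegral.abs_integral_le_integral_abs hab
      _ ≤ ∫ s in (0:ℝ)..L, |g s| :=
          intervalIntegral.integral_mono_interval h0 hab hbL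
            (ae_of_all _ (fun s => abs_nonneg _)) hgiabs
      _ ≤ C₀ := hC₀
  have hboth : ∀ a ∈ Icc (0:ℝ) L, ∀ b ∈ Icc (0:ℝ) L, f b ≤ Real.exp C₀ * f a := by
    intro a ha b hb
    rcases le_total a b with hab | hba
    · have := hId a b ha.1 hab hb.2
      rw [this, mul_comm]
      apply mul_le_mul_of_nonneg_right _ (hfpos a ha).le
      apply Real.exp_le_exp.mpr
      have := habs a b ha.1 hab hb.2
      have := neg_abs_le (∫ s in a..b, g s)
      linarith
    · have hident := hId b a hb.1 hba ha.2
      have hfb : f b = f a * Real.exp (∫ s in b..a, g s) := by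
        rw [hident, mul_assoc, ← Real.exp_add]
        simp
      rw [hfb, mul_comm]
      apply mul_le_mul_of_nonneg_right _ (hfpos a ha).le
      apply Real.exp_le_exp.mpr
      have h1 := habs b a hb.1 hba ha.2
      have := le_abs_self (∫ s in b..a, g s)
      linarith
  set S := (fun s => ‖ω (x s)‖) '' Icc (0:ℝ) L with hSdef
  have hSne : S.Nonempty := ⟨f 0, ⟨0, ⟨le_rfl, hL.le⟩, rfl⟩⟩
  have hSbdd : BddBelow S := ⟨0, fun z hz => by
    obtain ⟨s, _, rfl⟩ := hz; exact norm_nonneg _⟩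
  constructor
  · apply csSup_le hSne
    rintro z ⟨b, hb, rfl⟩
    have h1 : (Real.exp C₀)⁻¹ * f b ≤ sInf S := by
      apply le_csInf hSne
      rintro z ⟨a, ha, rfl⟩
      rw [inv_mul_le_iff₀ (Real.exp_pos C₀)]
      exact hboth a ha b hb
    calc f b = Real.exp C₀ * ((Real.exp C₀)⁻¹ * f b) := by
          field_simp
      _ ≤ Real.exp C₀ * sInf S :=
          mul_le_mul_of_nonneg_left h1 (Real.exp_pos C₀).le
  · apply mul_le_mul_of_nonneg_left _ (Real.exp_pos C₀).le
    have hfi : IntervalIntegrable f volume 0 L :=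
      (hfc.mono (by rw [uIcc_of_le hL.le])).intervalIntegrable
    have hmono : ∫ s in (0:ℝ)..L, sInf S ≤ ∫ s in (0:ℝ)..L, f s := by
      apply intervalIntegral.integral_mono_on hL.le intervalIntegrable_const hfi
      intro s hs
      exact csInf_le hSbdd ⟨s, hs, rfl⟩
    rw [intervalIntegral.integral_const, sub_zero, smul_eq_mul] at hmono
    rw [one_div]
    rw [inv_mul_eq_div, le_div_iff₀ hL]
    linarith [hmono]
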